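/- Let F be three times differentiable with |F'''| ≤ M₃, let x, z, δ ∈ ℝⁿ with ‖x‖₂ = √n, and let d > 0. Define φ − φ̃ = (1/(n·d))·xᵀR, where Rᵢ = F'(zᵢ+δᵢ) − F'(zᵢ) − F''(zᵢ)δᵢ. Then |φ − φ̃| ≤ (M₃/(2d))·‖δ‖₂·‖δ‖∞/√n, and if additionally ‖δ‖₂ ≤ ℓθ√n and ‖δ‖∞ ≤ ℓθL for constants ℓ, θ, L ≥ 0, then |φ − φ̃| ≤ (M₃/(2d))·ℓ²θ²L. -/

import Mathlib

private lemma taylor_half_nonneg (g g' g'' : ℝ → ℝ) (M : ℝ)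
    (hg : ∀ t, HasDerivAt g (g' t) t) (hg' : ∀ t, HasDerivAt g' (g'' t) t)
    (hM : ∀ t, |g'' t| ≤ M) (a h : ℝ) (hh : 0 ≤ h) :
    |g (a + h) - g a - g' a * h| ≤ M / 2 * h ^ 2 := by
  have hM0 : 0 ≤ M := le_trans (abs_nonneg _) (hM 0)
  -- g' is M-Lipschitz
  have lip : ∀ s t : ℝ, |g' s - g' t| ≤ M * |s - t| := by
    intro s t
    have := Convex.norm_image_sub_le_of_norm_hasDerivWithin_le
      (f := g') (f' := g'') (s := Set.univ) (C := M)
      (fun u _ => (hg' u).hasDerivWithinAt) (fun u _ => by simpa using hM u)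
      convex_univ (Set.mem_univ t) (Set.mem_univ s)
    simpa [Real.norm_eq_abs] using this
  set u : ℝ → ℝ := fun t => g (a + t) - g a - g' a * t with hu_def
  have hu : ∀ t, HasDerivAt u (g' (a + t) - g' a) t := by
    intro t
    have h1 : HasDerivAt (fun t : ℝ => g (a + t)) (g' (a + t) * 1) t :=
      (hg (a + t)).comp t ((hasDerivAt_id t).const_add a)
    have h2 : HasDerivAt (fun t : ℝ => g' a * t) (g' a) t := by
      simpa using (hasDerivAt_id t).const_mul (g' a)
    have h3 := (h1.sub_const (g a)).sub h2
    rw [mul_one] at h3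
    exact h3
  have hu'bound : ∀ t, 0 ≤ t → |g' (a + t) - g' a| ≤ M * t := by
    intro t ht
    have := lip (a + t) a
    simpa [abs_of_nonneg ht] using this
  have key : ∀ ε : ℝ, ε = 1 ∨ ε = -1 → ε * u h ≤ M / 2 * h ^ 2 := by
    intro ε hε
    set ψ : ℝ → ℝ := fun t => M / 2 * t ^ 2 - ε * u t with hψ
    have hψd : ∀ t, HasDerivAt ψ (M * t - ε * (g' (a + t) - g' a)) t := by
      intro t
      have h1 : HasDerivAt (fun t : ℝ => M / 2 * t ^ 2) (M / 2 * (2 * t)) t := by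
        simpa using (hasDerivAt_pow 2 t).const_mul (M / 2)
      have h2 := (hu t).const_mul ε
      exact (h1.sub h2).congr_deriv (by ring)
    have hmono : MonotoneOn ψ (Set.Ici 0) := by
      apply monotoneOn_of_deriv_nonneg (convex_Ici 0)
        (fun t _ => ((hψd t).continuousAt.continuousWithinAt))
        (fun t _ => ((hψd t).differentiableAt.differentiableWithinAt))
      intro t ht
      rw [interior_Ici] at ht
      rw [(hψd t).deriv]
      have ht' : (0:ℝ) ≤ t := le_of_lt ht
      have hb := hu'bound t ht'
      have : ε * (g' (a + t) - g' a) ≤ M * t := by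
        rcases hε with h | h <;> rw [h] <;>
          [skip; skip] <;>
          nlinarith [abs_le.mp hb, neg_abs_le (g' (a+t) - g' a), le_abs_self (g' (a+t) - g' a)]
      linarith
    have h0 : ψ 0 = 0 := by simp [hψ, hu_def]
    have := hmono (Set.mem_Ici.2 le_rfl) (Set.mem_Ici.2 hh) hh
    rw [h0] at this
    have : 0 ≤ M / 2 * h ^ 2 - ε * u h := this
    linarith
  have h1 := key 1 (Or.inl rfl)
  have h2 := key (-1) (Or.inr rfl)
  rw [abs_le]
  constructor <;> [linarith; linarith]

private lemma taylor_half (g g' g'' : ℝ → ℝ) (M : ℝ)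
    (hg : ∀ t, HasDerivAt g (g' t) t) (hg' : ∀ t, HasDerivAt g' (g'' t) t)
    (hM : ∀ t, |g'' t| ≤ M) (a h : ℝ) :
    |g (a + h) - g a - g' a * h| ≤ M / 2 * h ^ 2 := by
  rcases le_or_gt 0 h with hh | hh
  · exact taylor_half_nonneg g g' g'' M hg hg' hM a h hh
  · -- reflect: G t = g (-t)
    set G : ℝ → ℝ := fun t => g (-t) with hG
    set G' : ℝ → ℝ := fun t => -g' (-t) with hG'
    set G'' : ℝ → ℝ := fun t => g'' (-t) with hG''
    have hGd : ∀ t, HasDerivAt G (G' t) t := by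
      intro t
      exact ((hg (-t)).comp t (hasDerivAt_neg t)).congr_deriv (by simp [hG'])
    have hGd' : ∀ t, HasDerivAt G' (G'' t) t := by
      intro t
      have := ((hg' (-t)).comp t (hasDerivAt_neg t)).neg
      exact this.congr_deriv (by simp [hG''])
    have hMG : ∀ t, |G'' t| ≤ M := fun t => hM (-t)
    have := taylor_half_nonneg G G' G'' M hGd hGd' hMG (-a) (-h) (by linarith)
    have e : G (-a + -h) - G (-a) - G' (-a) * (-h) = g (a + h) - g a - g' a * h := by
      simp [hG, hG']; ring_nf
    rw [e] at this
    simpa using this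

theorem numerator_taylor_error
    (F F' F'' F''' : ℝ → ℝ) (M₃ : ℝ)
    (hF : ∀ t, HasDerivAt F (F' t) t)
    (hF' : ∀ t, HasDerivAt F' (F'' t) t)
    (hF'' : ∀ t, HasDerivAt F'' (F''' t) t)
    (hM : ∀ ξ, |F''' ξ| ≤ M₃)
    (n : ℕ) (x z δ : Fin n → ℝ) (d : ℝ) (hd : 0 < d)
    (hx : Real.sqrt (∑ i, x i ^ 2) = Real.sqrt n)
    (R : Fin n → ℝ)
    (hR : ∀ i, R i = F' (z i + δ i) - F' (z i) - F'' (z i) * δ i) :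
    |(1 / ((n : ℝ) * d)) * ∑ i, x i * R i| ≤
      (M₃ / (2 * d)) * Real.sqrt (∑ i, δ i ^ 2) * (⨆ i, |δ i|) /
        Real.sqrt n ∧
    (∀ ℓ θ L : ℝ, 0 ≤ ℓ → 0 ≤ θ → 0 ≤ L →
      Real.sqrt (∑ i, δ i ^ 2) ≤ ℓ * θ * Real.sqrt n →
      (⨆ i, |δ i|) ≤ ℓ * θ * L →
      |(1 / ((n : ℝ) * d)) * ∑ i, x i * R i| ≤
        (M₃ / (2 * d)) * ℓ ^ 2 * θ ^ 2 * L) := by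
  have hM0 : 0 ≤ M₃ := le_trans (abs_nonneg _) (hM 0)
  rcases Nat.eq_zero_or_pos n with hn | hn
  · subst hn
    constructor
    · simp
    · intro ℓ θ L hℓ hθ hL _ _
      simp only [Finset.univ_eq_empty, Finset.sum_empty, mul_zero, abs_zero]
      positivity
  · haveI : Nonempty (Fin n) := ⟨⟨0, hn⟩⟩
    set S2 := Real.sqrt (∑ i, δ i ^ 2) with hS2
    set Sb := ⨆ i, |δ i| with hSinf
    have hsn : (0:ℝ) < Real.sqrt n := Real.sqrt_pos.2 (by exact_mod_cast hn)
    have hbdd : BddAbove (Set.range fun i => |δ i|) := Set.Finite.bddAbove (Set.finite_range _)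
    have hle_sup : ∀ i, |δ i| ≤ Sb := fun i => le_ciSup hbdd i
    have hSb0 : 0 ≤ Sb := le_trans (abs_nonneg _) (hle_sup ⟨0, hn⟩)
    have hS20 : 0 ≤ S2 := Real.sqrt_nonneg _
    -- Taylor bound on each R i
    have hRb : ∀ i, |R i| ≤ M₃ / 2 * (δ i) ^ 2 := by
      intro i
      rw [hR i]
      exact taylor_half F' F'' F''' M₃ hF' hF'' hM (z i) (δ i)
    -- main sum bound
    have key : |∑ i, x i * R i| ≤ M₃ / 2 * (Real.sqrt n * S2) * Sb := by
      calc |∑ i, x i * R i| ≤ ∑ i, |x i * R i| := Finset.abs_sum_le_sum_abs _ _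
        _ = ∑ i, |x i| * |R i| := by simp [abs_mul]
        _ ≤ ∑ i, |x i| * (M₃ / 2 * (δ i) ^ 2) := by
            apply Finset.sum_le_sum
            intro i _
            exact mul_le_mul_of_nonneg_left (hRb i) (abs_nonneg _)
        _ = M₃ / 2 * ∑ i, |x i| * |δ i| * |δ i| := by
            rw [Finset.mul_sum]; congr 1; funext i; rw [← sq_abs]; ring
        _ ≤ M₃ / 2 * ∑ i, |x i| * |δ i| * Sb := by
            apply mul_le_mul_of_nonneg_left _ (by positivity)
            apply Finset.sum_le_sum
            intro i _
            exact mul_le_mul_of_nonneg_left (hle_sup i) (by positivity)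
        _ = M₃ / 2 * (∑ i, |x i| * |δ i|) * Sb := by
            rw [← Finset.sum_mul]; ring
        _ ≤ M₃ / 2 * (Real.sqrt n * S2) * Sb := by
            apply mul_le_mul_of_nonneg_right _ hSb0
            apply mul_le_mul_of_nonneg_left _ (by positivity)
            calc ∑ i, |x i| * |δ i|
                ≤ Real.sqrt (∑ i, |x i| ^ 2) * Real.sqrt (∑ i, |δ i| ^ 2) :=
                  Real.sum_mul_le_sqrt_mul_sqrt _ _ _
              _ = Real.sqrt n * S2 := by
                  simp only [sq_abs]; rw [hx, hS2]
    have hnpos : (0:ℝ) < n := by exact_mod_cast hn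
    have hmain : |(1 / ((n : ℝ) * d)) * ∑ i, x i * R i| ≤
        (M₃ / (2 * d)) * S2 * Sb / Real.sqrt n := by
      rw [abs_mul, abs_of_nonneg (by positivity : (0:ℝ) ≤ 1 / ((n:ℝ) * d))]
      have h1 : (1 / ((n : ℝ) * d)) * |∑ i, x i * R i| ≤
          (1 / ((n : ℝ) * d)) * (M₃ / 2 * (Real.sqrt n * S2) * Sb) :=
        mul_le_mul_of_nonneg_left key (by positivity)
      refine h1.trans_eq ?_
      have hsq : Real.sqrt n * Real.sqrt n = (n:ℝ) := Real.mul_self_sqrt (Nat.cast_nonneg n)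
      field_simp
      linear_combination (M₃ * S2 * Sb) * hsq
    refine ⟨hmain, ?_⟩
    intro ℓ θ L hℓ hθ hL h2 hinf
    refine hmain.trans ?_
    have step : (M₃ / (2 * d)) * S2 * Sb / Real.sqrt n ≤
        (M₃ / (2 * d)) * (ℓ * θ * Real.sqrt n) * (ℓ * θ * L) / Real.sqrt n := by
      gcongr <;> positivity
    refine step.trans_eq ?_
    field_simp
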